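/- Let K be a real quadratic number field (a totally real number field with [K : ℚ] = 2) with ring of integers 𝒪_K, and let p be an odd rational prime such that p·𝒪_K is a prime ideal of 𝒪_K (p is inert in K). Let v denote the prime p·𝒪_K and K_v the v-adic completion of K. Then there exist totally positive elements a, b, c ∈ 𝒪_K (meaning φ(a) > 0, φ(b) > 0, φ(c) > 0 for every real embedding φ : K → ℝ) such that the quadratic form a·x² + b·y² + c·z² is anisotropic over K_v, i.e. a·x² + b·y² + c·z² = 0 with x, y, z ∈ K_v implies x = y = z = 0. -/

import Mathlib

open IsDedekindDomain NumberField Multiplicative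

set_option synthInstance.maxHeartbeats 1000000
set_option maxHeartbeats 1000000

private lemma zm0_cases {γ : WithZero (Multiplicative ℤ)} (h : γ ≠ 0) :
    ∃ k : ℤ, γ = ((ofAdd k : Multiplicative ℤ) : WithZero (Multiplicative ℤ)) :=
  ⟨toAdd (WithZero.unzero h), by simp [WithZero.coe_unzero]⟩

private lemma zm0_lt_le {γ : WithZero (Multiplicative ℤ)} {t : ℤ}
    (h : γ < ((ofAdd t : Multiplicative ℤ) : WithZero (Multiplicative ℤ))) :
    γ ≤ ((ofAdd (t - 1) : Multiplicative ℤ) : WithZero (Multiplicative ℤ)) := by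
  rcases eq_or_ne γ 0 with rfl | h0
  · exact zero_le'
  · obtain ⟨k, rfl⟩ := zm0_cases h0
    rw [WithZero.coe_lt_coe, ofAdd_lt] at h
    rw [WithZero.coe_le_coe, ofAdd_le]
    omega

private lemma zm0_pow_ofAdd (i : ℕ) :
    (((ofAdd (-1 : ℤ) : Multiplicative ℤ) : WithZero (Multiplicative ℤ))) ^ i
      = ((ofAdd (-(i : ℤ)) : Multiplicative ℤ) : WithZero (Multiplicative ℤ)) := by
  rw [← WithZero.coe_pow, WithZero.coe_inj]
  rw [← ofAdd_toAdd (ofAdd (-1 : ℤ) ^ i), toAdd_pow]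
  simp [smul_eq_mul]

section Star

variable {K : Type*} [Field K] [NumberField K]

private lemma prime_p {p : ℕ} (hp : p.Prime)
    (v : HeightOneSpectrum (𝓞 K)) (hv : v.asIdeal = Ideal.span {(p : 𝓞 K)}) :
    Prime (p : 𝓞 K) := by
  have hπ0 : (p : 𝓞 K) ≠ 0 := Nat.cast_ne_zero.mpr hp.ne_zero
  exact (Ideal.span_singleton_prime hπ0).mp (hv ▸ v.isPrime)

private lemma val_p {p : ℕ} (hp : p.Prime)
    (v : HeightOneSpectrum (𝓞 K)) (hv : v.asIdeal = Ideal.span {(p : 𝓞 K)}) :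
    v.intValuationDef (p : 𝓞 K) =
      ((ofAdd (-1 : ℤ) : Multiplicative ℤ) : WithZero (Multiplicative ℤ)) := by
  have hπ0 : (p : 𝓞 K) ≠ 0 := Nat.cast_ne_zero.mpr hp.ne_zero
  have hπp : Prime (p : 𝓞 K) := prime_p hp v hv
  have h1 : v.intValuationDef (p : 𝓞 K) ≤ (ofAdd (-1 : ℤ) : Multiplicative ℤ) := by
    have := (v.intValuation_le_pow_iff_dvd (p : 𝓞 K) 1).mpr (by rw [hv, pow_one])
    exact this
  have h2 : ¬ v.intValuationDef (p : 𝓞 K) ≤ (ofAdd (-2 : ℤ) : Multiplicative ℤ) := by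
    intro hle
    have h2' := (v.intValuation_le_pow_iff_dvd (p : 𝓞 K) 2).mp (by exact hle)
    rw [hv, Ideal.span_singleton_pow, Ideal.dvd_span_singleton,
      Ideal.mem_span_singleton] at h2'
    obtain ⟨t, ht⟩ := h2'
    have h1' : (1 : 𝓞 K) = (p : 𝓞 K) * t := by
      apply mul_left_cancel₀ hπ0
      rw [mul_one]; nth_rewrite 1 [ht]; ring
    exact hπp.not_isUnit (IsUnit.of_mul_eq_one t h1'.symm)
  obtain ⟨k, hk⟩ := zm0_cases (v.intValuation_ne_zero (p : 𝓞 K) hπ0)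
  rw [HeightOneSpectrum.intValuation_apply v] at hk
  rw [hk] at h1 h2 ⊢
  rw [WithZero.coe_le_coe, ofAdd_le] at h1 h2
  rw [WithZero.coe_inj]
  have : k = -1 := by omega
  rw [this]

private lemma star_aux {p : ℕ} (hp : p.Prime)
    (v : HeightOneSpectrum (𝓞 K)) (hv : v.asIdeal = Ideal.span {(p : 𝓞 K)})
    (b : 𝓞 K) (hbn : ∀ σ ρ : 𝓞 K, ρ ∉ v.asIdeal → σ * σ + b * (ρ * ρ) ∉ v.asIdeal)
    (w : K) (hw : v.valuation K w ≤ 1) :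
    ¬ v.valuation K (w * w + algebraMap (𝓞 K) K b) < 1 := by
  have hπ0 : (p : 𝓞 K) ≠ 0 := Nat.cast_ne_zero.mpr hp.ne_zero
  have hπp : Prime (p : 𝓞 K) := prime_p hp v hv
  have hmem : ∀ x : 𝓞 K, x ∈ v.asIdeal ↔ (p : 𝓞 K) ∣ x := fun x => by
    rw [hv, Ideal.mem_span_singleton]
  have hone : (1 : 𝓞 K) ∉ v.asIdeal := fun h =>
    v.isPrime.ne_top ((Ideal.eq_top_iff_one _).mpr h)
  have hbmem : b ∉ v.asIdeal := by
    have h01 := hbn 0 1 hone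
    simpa using h01
  intro hlt
  obtain ⟨s, r, hrnz, hwsr⟩ := IsFractionRing.div_surjective (A := 𝓞 K) w
  have hr0 : r ≠ 0 := nonZeroDivisors.ne_zero hrnz
  have hrK : algebraMap (𝓞 K) K r ≠ 0 := by
    simpa using (IsFractionRing.to_map_eq_zero_iff (K := K)).not.mpr hr0
  by_cases hs0 : s = 0
  · have hw0 : w = 0 := by rw [← hwsr, hs0, map_zero, zero_div]
    rw [hw0, mul_zero, zero_add, v.valuation_of_algebraMap, HeightOneSpectrum.intValuation_apply v,
      ← HeightOneSpectrum.intValuation_apply v, v.intValuation_lt_one_iff_dvd, Ideal.dvd_span_singleton] at hlt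
    exact hbmem hlt
  -- factor out powers of p
  obtain ⟨i, s', hs', hsf⟩ := WfDvdMonoid.max_power_factor hs0 hπp.irreducible
  obtain ⟨j, r', hr', hrf⟩ := WfDvdMonoid.max_power_factor hr0 hπp.irreducible
  have hs'v : v.intValuationDef s' = 1 := by
    rcases lt_or_eq_of_le (v.intValuation_le_one s') with hlt' | he
    · exact absurd ((Ideal.dvd_span_singleton.mp
        ((v.intValuation_lt_one_iff_dvd s').mp hlt'))) (by rw [hmem]; exact hs')
    · exact he
  have hr'v : v.intValuationDef r' = 1 := by
    rcases lt_or_eq_of_le (v.intValuation_le_one r') with hlt' | he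
    · exact absurd ((Ideal.dvd_span_singleton.mp
        ((v.intValuation_lt_one_iff_dvd r').mp hlt'))) (by rw [hmem]; exact hr')
    · exact he
  have hπval := val_p hp v hv
  have hsval : v.intValuationDef s
      = ((ofAdd (-(i : ℤ)) : Multiplicative ℤ) : WithZero (Multiplicative ℤ)) := by
    rw [← HeightOneSpectrum.intValuation_apply v, hsf, map_mul, map_pow, HeightOneSpectrum.intValuation_apply v, HeightOneSpectrum.intValuation_apply v,
      hπval, hs'v, zm0_pow_ofAdd, mul_one]
  have hrval : v.intValuationDef r
      = ((ofAdd (-(j : ℤ)) : Multiplicative ℤ) : WithZero (Multiplicative ℤ)) := by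
    rw [← HeightOneSpectrum.intValuation_apply v, hrf, map_mul, map_pow, HeightOneSpectrum.intValuation_apply v, HeightOneSpectrum.intValuation_apply v,
      hπval, hr'v, zm0_pow_ofAdd, mul_one]
  -- from hw : j ≤ i
  have hwval : v.valuation K w
      = ((ofAdd ((j : ℤ) - i) : Multiplicative ℤ) : WithZero (Multiplicative ℤ)) := by
    rw [← hwsr, map_div₀, v.valuation_of_algebraMap, v.valuation_of_algebraMap,
      HeightOneSpectrum.intValuation_apply v, HeightOneSpectrum.intValuation_apply v, hsval, hrval, ← WithZero.coe_div,
      WithZero.coe_inj, ← ofAdd_sub]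
    congr 1
    ring
  have hji : j ≤ i := by
    rw [hwval] at hw
    rw [show (1 : WithZero (Multiplicative ℤ)) = ((ofAdd (0 : ℤ) : Multiplicative ℤ) :
      WithZero (Multiplicative ℤ)) by simp, WithZero.coe_le_coe, ofAdd_le] at hw
    omega
  -- rewrite the element whose valuation is < 1
  have heq : w * w + algebraMap (𝓞 K) K b
      = algebraMap (𝓞 K) K (s * s + b * (r * r)) / algebraMap (𝓞 K) K (r * r) := by
    rw [← hwsr]
    field_simp
    simp only [map_add, map_mul]; ring
  have hrrval : v.intValuationDef (r * r)
      = ((ofAdd (-(2 * j : ℤ)) : Multiplicative ℤ) : WithZero (Multiplicative ℤ)) := by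
    rw [← HeightOneSpectrum.intValuation_apply v, map_mul, HeightOneSpectrum.intValuation_apply v, hrval,
      ← WithZero.coe_mul, WithZero.coe_inj, ← ofAdd_add]
    congr 1
    ring
  have hnumlt : v.intValuationDef (s * s + b * (r * r))
      < ((ofAdd (-(2 * j : ℤ)) : Multiplicative ℤ) : WithZero (Multiplicative ℤ)) := by
    rw [heq, map_div₀, v.valuation_of_algebraMap, v.valuation_of_algebraMap,
      HeightOneSpectrum.intValuation_apply v, HeightOneSpectrum.intValuation_apply v, hrrval] at hlt
    have hne : ((ofAdd (-(2 * j : ℤ)) : Multiplicative ℤ) : WithZero (Multiplicative ℤ)) ≠ 0 :=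
      WithZero.coe_ne_zero
    rw [div_lt_iff₀ (lt_of_le_of_ne (zero_le') (Ne.symm hne)), one_mul] at hlt
    exact hlt
  have hnumdvd : (p : 𝓞 K) ^ (2 * j + 1) ∣ s * s + b * (r * r) := by
    have hle := zm0_lt_le hnumlt
    have : v.intValuationDef (s * s + b * (r * r))
        ≤ Multiplicative.ofAdd (-((2 * j + 1 : ℕ) : ℤ)) := by
      convert hle using 2
      push_cast
      ring
    have := (v.intValuation_le_pow_iff_dvd _ (2 * j + 1)).mp this
    rwa [hv, Ideal.span_singleton_pow, Ideal.dvd_span_singleton,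
      Ideal.mem_span_singleton] at this
  -- pull out p^(2j)
  have hnumfac : s * s + b * (r * r)
      = (p : 𝓞 K) ^ (2 * j) * ((p : 𝓞 K) ^ (2 * (i - j)) * (s' * s') + b * (r' * r')) := by
    have h2i : (p : 𝓞 K) ^ (2 * i) = (p : 𝓞 K) ^ (2 * j) * (p : 𝓞 K) ^ (2 * (i - j)) := by
      rw [← pow_add]
      congr 1
      omega
    calc s * s + b * (r * r)
        = (p : 𝓞 K) ^ (2 * i) * (s' * s') + b * ((p : 𝓞 K) ^ (2 * j) * (r' * r')) := by
          rw [hsf, hrf]; ring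
      _ = (p : 𝓞 K) ^ (2 * j) * ((p : 𝓞 K) ^ (2 * (i - j)) * (s' * s') + b * (r' * r')) := by
          rw [h2i]; ring
  have hdvdM : (p : 𝓞 K) ∣ (p : 𝓞 K) ^ (2 * (i - j)) * (s' * s') + b * (r' * r') := by
    have h := hnumdvd
    rw [hnumfac, pow_succ] at h
    exact (mul_dvd_mul_iff_left (pow_ne_zero (2 * j) hπ0)).mp h
  rcases eq_or_lt_of_le hji with hji' | hji'
  · -- j = i : use the key hypothesis on b
    rw [show 2 * (i - j) = 0 by omega, pow_zero, one_mul] at hdvdM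
    exact hbn s' r' (fun h => hr' ((hmem r').mp h)) ((hmem _).mpr hdvdM)
  · -- j < i
    have h1 : (p : 𝓞 K) ∣ (p : 𝓞 K) ^ (2 * (i - j)) * (s' * s') :=
      dvd_mul_of_dvd_left (dvd_pow_self _ (by omega)) _
    have h2 : (p : 𝓞 K) ∣ b * (r' * r') := (dvd_add_right h1).mp hdvdM
    rcases hπp.dvd_mul.mp h2 with h | h
    · exact hbmem ((hmem b).mpr h)
    · rcases hπp.dvd_mul.mp h with h' | h' <;> exact hr' h'

end Star

section Completion

variable {K : Type*} [Field K] [NumberField K]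

private lemma coe_val (v : HeightOneSpectrum (𝓞 K)) (k : K) :
    Valued.v (algebraMap K (v.adicCompletion K) k) = v.valuation K k :=
  HeightOneSpectrum.valuedAdicCompletion_eq_valuation' v k

private lemma lemB (v : HeightOneSpectrum (𝓞 K)) (b : 𝓞 K)
    (hb1 : v.valuation K (algebraMap (𝓞 K) K b) = 1)
    (hstar : ∀ w : K, v.valuation K w ≤ 1 →
      ¬ v.valuation K (w * w + algebraMap (𝓞 K) K b) < 1)
    (t : v.adicCompletion K) (ht : Valued.v t = 1) :
    Valued.v (t * t + algebraMap K (v.adicCompletion K) (algebraMap (𝓞 K) K b)) = 1 := by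
  set B := algebraMap K (v.adicCompletion K) (algebraMap (𝓞 K) K b) with hB
  have hBv : Valued.v B = 1 := by rw [hB, coe_val]; exact hb1
  have hdense : DenseRange ((↑) : K → v.adicCompletion K) :=
    HeightOneSpectrum.denseRange_algebraMap (K := K) (v := v)
  have hU : {u : v.adicCompletion K | Valued.v (u - t) < (1 : WithZero (Multiplicative ℤ))}
      ∈ nhds t := by
    rw [Valued.mem_nhds]
    exact ⟨1, fun y hy => by simpa using hy⟩
  obtain ⟨u, hu1, w, hwu⟩ := mem_closure_iff_nhds.mp (hdense t) _ hU
  have hwcoe : algebraMap K (v.adicCompletion K) w = u := hwu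
  set W := algebraMap K (v.adicCompletion K) w with hW
  have hwt : Valued.v (W - t) < 1 := by rw [hwcoe]; exact hu1
  have hwv : Valued.v W = 1 := by
    have h1 : W = t + (W - t) := by ring
    rw [h1, Valued.v.map_add_eq_of_lt_left (by rw [ht]; exact hwt)]
    exact ht
  have hwK : v.valuation K w = 1 := by rw [← coe_val v w]; exact hwv
  have hK1 : v.valuation K (w * w + algebraMap (𝓞 K) K b) = 1 := by
    have hle : v.valuation K (w * w + algebraMap (𝓞 K) K b) ≤ 1 := by
      refine le_trans ((v.valuation K).map_add _ _) (max_le ?_ (le_of_eq hb1))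
      rw [map_mul, hwK, mul_one]
    rcases lt_or_eq_of_le hle with h | h
    · exact absurd h (hstar w (le_of_eq hwK))
    · exact h
  have hCv : Valued.v (algebraMap K (v.adicCompletion K) (w * w + algebraMap (𝓞 K) K b)) = 1 := by
    rw [coe_val]; exact hK1
  have hsplit : algebraMap K (v.adicCompletion K) (w * w + algebraMap (𝓞 K) K b)
      = W * W + B := by
    rw [map_add, map_mul]
  have hdiff : Valued.v (W * W + B - (t * t + B)) < 1 := by
    have h2 : W * W + B - (t * t + B) = (W - t) * (W + t) := by ring
    rw [h2, map_mul]
    have h3 : Valued.v (W + t) ≤ 1 :=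
      le_trans (Valued.v.map_add _ _) (max_le (le_of_eq hwv) (le_of_eq ht))
    calc Valued.v (W - t) * Valued.v (W + t) ≤ Valued.v (W - t) * 1 :=
          mul_le_mul_right h3 _
      _ < 1 := by rw [mul_one]; exact hwt
  have hWWB : Valued.v (W * W + B) = 1 := by rw [← hsplit]; exact hCv
  have hneg : Valued.v (-(W * W + B - (t * t + B))) < 1 := by
    rw [Valuation.map_neg]; exact hdiff
  have hfin : t * t + B = (W * W + B) + -(W * W + B - (t * t + B)) := by ring
  rw [hfin, Valued.v.map_add_eq_of_lt_left (by rw [hWWB]; exact hneg), hWWB]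

private lemma lemA (v : HeightOneSpectrum (𝓞 K)) (b : 𝓞 K)
    (hb1 : v.valuation K (algebraMap (𝓞 K) K b) = 1)
    (hstar : ∀ w : K, v.valuation K w ≤ 1 →
      ¬ v.valuation K (w * w + algebraMap (𝓞 K) K b) < 1)
    (x y : v.adicCompletion K) :
    Valued.v (x * x + algebraMap K (v.adicCompletion K) (algebraMap (𝓞 K) K b) * (y * y))
      = max (Valued.v x) (Valued.v y) * max (Valued.v x) (Valued.v y) := by
  set B := algebraMap K (v.adicCompletion K) (algebraMap (𝓞 K) K b) with hB
  have hBv : Valued.v B = 1 := by rw [hB, coe_val]; exact hb1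
  by_cases hy : y = 0
  · subst hy
    rw [mul_zero, mul_zero, add_zero, map_mul, map_zero]
    rw [max_eq_left (zero_le')]
  · have hy0 : Valued.v y ≠ 0 := (Valuation.ne_zero_iff _).mpr hy
    set t := x * y⁻¹ with htdef
    have hx : x = t * y := by
      rw [htdef, mul_assoc, inv_mul_cancel₀ hy, mul_one]
    have key : x * x + B * (y * y) = (y * y) * (t * t + B) := by rw [hx]; ring
    rw [key, map_mul, map_mul]
    rcases lt_trichotomy (Valued.v t) 1 with hlt | heq | hgt
    · have htt : Valued.v (t * t) < 1 := by
        rw [map_mul]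
        calc Valued.v t * Valued.v t ≤ 1 * Valued.v t := mul_le_mul_left hlt.le _
          _ = Valued.v t := one_mul _
          _ < 1 := hlt
      have h1 : Valued.v (t * t + B) = 1 := by
        rw [Valued.v.map_add_eq_of_lt_right (by rw [hBv]; exact htt)]
        exact hBv
      have hxy : Valued.v x ≤ Valued.v y := by
        rw [hx, map_mul]
        calc Valued.v t * Valued.v y ≤ 1 * Valued.v y := mul_le_mul_left hlt.le _
          _ = Valued.v y := one_mul _
      rw [max_eq_right hxy, h1, mul_one]
    · have h1 := lemB v b hb1 hstar t heq
      have hxy : Valued.v x = Valued.v y := by rw [hx, map_mul, heq, one_mul]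
      rw [h1, mul_one, hxy, max_self]
    · have htt : (1 : WithZero (Multiplicative ℤ)) < Valued.v (t * t) := by
        rw [map_mul]
        calc (1 : WithZero (Multiplicative ℤ)) < Valued.v t := hgt
          _ = Valued.v t * 1 := (mul_one _).symm
          _ ≤ Valued.v t * Valued.v t := mul_le_mul_right hgt.le _
      have h1 : Valued.v (t * t + B) = Valued.v t * Valued.v t := by
        rw [Valued.v.map_add_eq_of_lt_left (by rw [hBv, map_mul] at *; exact htt)]
        exact map_mul _ _ _
      have hxy : Valued.v y ≤ Valued.v x := by
        rw [hx, map_mul]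
        calc Valued.v y = 1 * Valued.v y := (one_mul _).symm
          _ ≤ Valued.v t * Valued.v y := mul_le_mul_left hgt.le _
      have hVx : Valued.v x = Valued.v t * Valued.v y := by rw [hx, map_mul]
      rw [max_eq_left hxy, h1, hVx, mul_mul_mul_comm, mul_comm (Valued.v y) (Valued.v t),
        mul_mul_mul_comm]

end Completion

section ExistsB

variable {K : Type*} [Field K] [NumberField K]

private lemma exists_b (p : ℕ) (hp : p.Prime) (hodd : Odd p)
    (v : HeightOneSpectrum (𝓞 K)) (hv : v.asIdeal = Ideal.span {(p : 𝓞 K)}) :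
    ∃ b : 𝓞 K, ∀ σ ρ : 𝓞 K, ρ ∉ v.asIdeal → σ * σ + b * (ρ * ρ) ∉ v.asIdeal := by
  haveI hmax : v.asIdeal.IsMaximal := Ideal.IsPrime.isMaximal v.isPrime v.ne_bot
  letI : Field (𝓞 K ⧸ v.asIdeal) := Ideal.Quotient.field v.asIdeal
  letI : Fintype (𝓞 K ⧸ v.asIdeal) := @Fintype.ofFinite _ (Ideal.finiteQuotientOfFreeOfNeBot v.asIdeal v.ne_bot)
  have hpmem : (p : 𝓞 K) ∈ v.asIdeal := by
    rw [hv]; exact Ideal.mem_span_singleton_self _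
  have hchar : (p : 𝓞 K ⧸ v.asIdeal) = 0 := by
    rw [← map_natCast (Ideal.Quotient.mk v.asIdeal)]
    exact Ideal.Quotient.eq_zero_iff_mem.mpr hpmem
  have hdvd : ringChar (𝓞 K ⧸ v.asIdeal) ∣ p :=
    (CharP.cast_eq_zero_iff _ (ringChar _) p).mp hchar
  have hne2 : ringChar (𝓞 K ⧸ v.asIdeal) ≠ 2 := by
    rcases (Nat.Prime.eq_one_or_self_of_dvd hp _ hdvd) with h | h
    · exact absurd h (CharP.char_ne_one (𝓞 K ⧸ v.asIdeal) (ringChar (𝓞 K ⧸ v.asIdeal)))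
    · rw [h]; intro h2; rw [h2] at hodd; obtain ⟨k, hk⟩ := hodd; omega
  obtain ⟨n, hn⟩ := FiniteField.exists_nonsquare hne2
  obtain ⟨b, hb⟩ := Ideal.Quotient.mk_surjective (-n)
  refine ⟨b, ?_⟩
  intro σ ρ hρ hmemv
  apply hn
  obtain ⟨ρ', c, hc, hcc⟩ := hmax.exists_inv hρ
  set q := Ideal.Quotient.mk v.asIdeal with hq
  have h1 : q σ * q σ + q b * (q ρ * q ρ) = 0 := by
    have h0 := Ideal.Quotient.eq_zero_iff_mem.mpr hmemv
    rw [show Ideal.Quotient.mk v.asIdeal (σ * σ + b * (ρ * ρ))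
      = q σ * q σ + q b * (q ρ * q ρ) by rw [hq, map_add, map_mul, map_mul, map_mul]] at h0
    exact h0
  have h2 : q ρ' * q ρ = 1 := by
    have h3 := congrArg q hcc
    rw [map_add, map_mul, map_one, Ideal.Quotient.eq_zero_iff_mem.mpr hc, add_zero] at h3
    exact h3
  have hbn : q b = -n := hb
  refine ⟨q σ * q ρ', ?_⟩
  have e1 : q σ * q σ = n * (q ρ * q ρ) := by
    linear_combination h1 - (q ρ * q ρ) * hbn
  linear_combination (-(q ρ' * q ρ')) * e1 - (n * (q ρ * q ρ' + 1)) * h2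

end ExistsB

/-- for a real quadratic field `K` and an odd prime `p` inert in
`K`, there are totally positive integers `a, b, c` such that
`a·x² + b·y² + c·z²` is anisotropic over the `v`-adic completion of `K` at
`v = p·𝒪_K`. -/
theorem stmt_6 (K : Type*) [Field K] [NumberField K]
    (htr : ∀ (φ : K →+* ℂ) (x : K), (φ x).im = 0)
    (hdeg : Module.finrank ℚ K = 2)
    (p : ℕ) (hp : p.Prime) (hodd : Odd p)
    (v : HeightOneSpectrum (𝓞 K))
    (hv : v.asIdeal = Ideal.span {(p : 𝓞 K)}) :
    ∃ a b c : 𝓞 K,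
      (∀ φ : K →+* ℝ, 0 < φ (a : K)) ∧
      (∀ φ : K →+* ℝ, 0 < φ (b : K)) ∧
      (∀ φ : K →+* ℝ, 0 < φ (c : K)) ∧
      ∀ x y z : v.adicCompletion K,
        algebraMap K (v.adicCompletion K) (a : K) * x ^ 2 +
            algebraMap K (v.adicCompletion K) (b : K) * y ^ 2 +
            algebraMap K (v.adicCompletion K) (c : K) * z ^ 2 = 0 →
          x = 0 ∧ y = 0 ∧ z = 0 := by
  obtain ⟨b₀, hb₀⟩ := exists_b p hp hodd v hv
  set M : ℕ := (Finset.univ.sup fun φ : K →+* ℝ => ⌈-(φ ((b₀ : K)))⌉₊) + 1 with hM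
  set b : 𝓞 K := b₀ + ((M * p : ℕ) : 𝓞 K) with hbdef
  have hone : (1 : 𝓞 K) ∉ v.asIdeal := fun h =>
    v.isPrime.ne_top ((Ideal.eq_top_iff_one _).mpr h)
  have hMp : ((M * p : ℕ) : 𝓞 K) ∈ v.asIdeal := by
    rw [hv]
    exact Ideal.mem_span_singleton.mpr ⟨(M : 𝓞 K), by push_cast; ring⟩
  have hbprop : ∀ σ ρ : 𝓞 K, ρ ∉ v.asIdeal → σ * σ + b * (ρ * ρ) ∉ v.asIdeal := by
    intro σ ρ hρ h
    apply hb₀ σ ρ hρ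
    have hsub : σ * σ + b₀ * (ρ * ρ)
        = (σ * σ + b * (ρ * ρ)) - ((M * p : ℕ) : 𝓞 K) * (ρ * ρ) := by
      rw [hbdef]; ring
    rw [hsub]
    exact Submodule.sub_mem _ h (Ideal.mul_mem_right _ _ hMp)
  have hbmem : b ∉ v.asIdeal := by
    have h01 := hbprop 0 1 hone
    simpa using h01
  have hb1 : v.valuation K (algebraMap (𝓞 K) K b) = 1 := by
    rcases lt_or_eq_of_le (show v.valuation K (algebraMap (𝓞 K) K b) ≤ 1 from v.valuation_le_one b) with hlt' | he
    · rw [v.valuation_lt_one_iff_dvd, Ideal.dvd_span_singleton] at hlt'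
      exact absurd hlt' hbmem
    · exact he
  have hstar := star_aux hp v hv b hbprop
  refine ⟨1, b, (p : 𝓞 K), ?_, ?_, ?_, ?_⟩
  · intro φ
    rw [show ((1 : 𝓞 K) : K) = 1 from map_one (algebraMap (𝓞 K) K), map_one]
    exact zero_lt_one
  · intro φ
    have hcast : ((b : 𝓞 K) : K) = (b₀ : K) + ((M * p : ℕ) : K) := by
      rw [hbdef]; push_cast; ring
    rw [hcast, map_add, map_natCast]
    have h1 : (⌈-(φ ((b₀ : K)))⌉₊ : ℝ) < M := by
      have h2 : ⌈-(φ ((b₀ : K)))⌉₊ < M := by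
        rw [hM]
        exact Nat.lt_succ_of_le (Finset.le_sup (f := fun φ : K →+* ℝ => ⌈-(φ ((b₀ : K)))⌉₊) (Finset.mem_univ φ))
      exact_mod_cast h2
    have h2 : -(φ ((b₀ : K))) ≤ (⌈-(φ ((b₀ : K)))⌉₊ : ℝ) := Nat.le_ceil _
    have h3 : (M : ℝ) ≤ ((M * p : ℕ) : ℝ) := by
      have := Nat.le_mul_of_pos_right M hp.pos
      exact_mod_cast this
    linarith
  · intro φ
    rw [show (((p : 𝓞 K) : K)) = (p : K) by push_cast; ring, map_natCast]
    exact_mod_cast hp.pos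
  · intro x y z heq
    set B := algebraMap K (v.adicCompletion K) (algebraMap (𝓞 K) K b) with hB
    set C := algebraMap K (v.adicCompletion K) (algebraMap (𝓞 K) K (p : 𝓞 K)) with hC
    have heq2 : x * x + B * (y * y) = -(C * (z * z)) := by
      rw [hB, hC]
      have h1 : ((1 : 𝓞 K) : K) = 1 := map_one (algebraMap (𝓞 K) K)
      rw [h1, map_one, one_mul] at heq
      linear_combination heq
    have hL := lemA v b hb1 hstar x y
    have hCv : Valued.v C = ((ofAdd (-1 : ℤ) : Multiplicative ℤ) : WithZero (Multiplicative ℤ)) := by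
      rw [hC, coe_val, v.valuation_of_algebraMap, HeightOneSpectrum.intValuation_apply v,
        val_p hp v hv]
    set m := max (Valued.v x) (Valued.v y) with hm
    have hmm : m * m = ((ofAdd (-1 : ℤ) : Multiplicative ℤ) : WithZero (Multiplicative ℤ))
        * (Valued.v z * Valued.v z) := by
      rw [← hL, heq2, Valuation.map_neg, map_mul, hCv, map_mul]
    have hz : z = 0 := by
      by_contra hz
      have hz0 : Valued.v z ≠ 0 := (Valuation.ne_zero_iff _).mpr hz
      obtain ⟨k, hk⟩ := zm0_cases hz0
      rcases eq_or_ne m 0 with hm0 | hm0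
      · rw [hm0, hk, zero_mul, ← WithZero.coe_mul, ← WithZero.coe_mul] at hmm
        exact WithZero.coe_ne_zero hmm.symm
      · obtain ⟨l, hl⟩ := zm0_cases hm0
        rw [hl, hk, ← WithZero.coe_mul, ← WithZero.coe_mul, ← WithZero.coe_mul,
          WithZero.coe_inj, ← ofAdd_add, ← ofAdd_add, ← ofAdd_add] at hmm
        have := Multiplicative.ofAdd.injective hmm
        omega
    have hm0 : m = 0 := by
      rw [hz, map_zero, mul_zero, mul_zero] at hmm
      exact mul_self_eq_zero.mp hmm
    have hx0 : x = 0 := by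
      apply (Valuation.zero_iff (Valued.v)).mp
      exact le_antisymm (le_trans (le_max_left _ (Valued.v y)) (le_of_eq hm0)) zero_le'
    have hy0 : y = 0 := by
      apply (Valuation.zero_iff (Valued.v)).mp
      exact le_antisymm (le_trans (le_max_right (Valued.v x) _) (le_of_eq hm0)) zero_le'
    exact ⟨hx0, hy0, hz⟩
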